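/- arXiv:2209.07876 — 3 statements merged into one kernel-verified Lean document; each statement's English description precedes it below -/
import Mathlib

section
/- Let R be a commutative ring of prime characteristic p and let D, D' : R → R be derivations. Then the commutator [D, D'] = D ∘ D' − D' ∘ D is again a derivation, and moreover the p-fold composition D^p = D ∘ ... ∘ D (p times) is a derivation. -/
open Finset

private lemma deriv_mul' {R : Type*} [CommRing R] (D : Derivation ℤ R R) (a b : R) :
    D (a * b) = D a * b + a * D b := by
  rw [D.leibniz]; simp [smul_eq_mul]; ring

private lemma iterate_deriv_mul {R : Type*} [CommRing R] (D : Derivation ℤ R R) (n : ℕ)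
    (p q : R) :
    (⇑D)^[n] (p * q) =
      ∑ k ∈ range n.succ, (n.choose k • ((⇑D)^[n - k] p * (⇑D)^[k] q)) := by
  induction n with
  | zero =>
    simp [Finset.range]
  | succ n IH =>
    calc
      (⇑D)^[n + 1] (p * q) =
          D (∑ k ∈ range n.succ,
              n.choose k • ((⇑D)^[n - k] p * (⇑D)^[k] q)) := by
        rw [Function.iterate_succ_apply', IH]
      _ = (∑ k ∈ range n.succ,
            n.choose k • ((⇑D)^[n - k + 1] p * (⇑D)^[k] q)) +
          ∑ k ∈ range n.succ,
            n.choose k • ((⇑D)^[n - k] p * (⇑D)^[k + 1] q) := by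
        rw [map_sum]
        simp_rw [map_nsmul, deriv_mul', Function.iterate_succ_apply',
          smul_add, sum_add_distrib]
      _ = (∑ k ∈ range n.succ,
                n.choose k.succ • ((⇑D)^[n - k] p * (⇑D)^[k + 1] q)) +
              1 • ((⇑D)^[n + 1] p * (⇑D)^[0] q) +
            ∑ k ∈ range n.succ, n.choose k • ((⇑D)^[n - k] p * (⇑D)^[k + 1] q) :=
        ?_
      _ = ((∑ k ∈ range n.succ, n.choose k • ((⇑D)^[n - k] p * (⇑D)^[k + 1] q)) +
              ∑ k ∈ range n.succ,
                n.choose k.succ • ((⇑D)^[n - k] p * (⇑D)^[k + 1] q)) +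
            1 • ((⇑D)^[n + 1] p * (⇑D)^[0] q) := by
        rw [add_comm, add_assoc]
      _ = (∑ i ∈ range n.succ,
              (n + 1).choose (i + 1) • ((⇑D)^[n + 1 - (i + 1)] p * (⇑D)^[i + 1] q)) +
            1 • ((⇑D)^[n + 1] p * (⇑D)^[0] q) := by
        simp_rw [Nat.choose_succ_succ, Nat.succ_sub_succ, add_smul, sum_add_distrib]
      _ = ∑ k ∈ range n.succ.succ,
            n.succ.choose k • ((⇑D)^[n.succ - k] p * (⇑D)^[k] q) := by
        rw [sum_range_succ' _ n.succ, Nat.choose_zero_right, tsub_zero]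
    congr
    refine (sum_range_succ' _ _).trans (congr_arg₂ (· + ·) ?_ ?_)
    · rw [sum_range_succ, Nat.choose_succ_self, zero_smul, add_zero]
      refine sum_congr rfl fun k hk => ?_
      rw [mem_range] at hk
      congr
      omega
    · rw [Nat.choose_zero_right, tsub_zero]


private lemma iterate_deriv_zsmul {R : Type*} [CommRing R] (D : Derivation ℤ R R) (n : ℕ)
    (m : ℤ) (x : R) : (⇑D)^[n] (m • x) = m • (⇑D)^[n] x := by
  induction n with
  | zero => simp
  | succ k ih => rw [Function.iterate_succ_apply', Function.iterate_succ_apply', ih, D.map_smul]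

/-- In a commutative ring of prime characteristic `p`, the commutator of two
derivations is a derivation, and the `p`-fold composition of a derivation with
itself is a derivation. -/
theorem stmt4 {R : Type*} [CommRing R] (p : ℕ) [Fact p.Prime] [CharP R p]
    (D D' : Derivation ℤ R R) :
    (∃ E : Derivation ℤ R R, ∀ x : R, E x = D (D' x) - D' (D x)) ∧
    (∃ E : Derivation ℤ R R, ∀ x : R, E x = (⇑D)^[p] x) := by
  constructor
  · exact ⟨⁅D, D'⁆, fun x => rfl⟩
  · have hp := (Fact.out : p.Prime)
    refine ⟨{ toFun := fun x => (⇑D)^[p] x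
              map_add' := fun x y => by simp [iterate_map_add]
              map_smul' := fun m x => by
                simp only [RingHom.id_apply]
                exact iterate_deriv_zsmul D p m x
              map_one_eq_zero' := ?_
              leibniz' := ?_ }, fun x => rfl⟩
    · show (⇑D)^[p] 1 = 0
      obtain ⟨q, rfl⟩ : ∃ q, p = q + 1 := ⟨p - 1, by have := hp.one_lt; omega⟩
      rw [Function.iterate_succ_apply, Derivation.map_one_eq_zero, iterate_map_zero]
    · intro a b
      show (⇑D)^[p] (a * b) = a • (⇑D)^[p] b + b • (⇑D)^[p] a
      rw [iterate_deriv_mul]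
      rw [Finset.sum_range_succ]
      have h0 : ∀ k ∈ Finset.range p, k ≠ 0 →
          (p.choose k) • ((⇑D)^[p - k] a * (⇑D)^[k] b) = 0 := by
        intro k hk hk0
        rw [Finset.mem_range] at hk
        have hdvd : (p : ℕ) ∣ p.choose k := hp.dvd_choose_self hk0 hk
        rw [nsmul_eq_mul]
        obtain ⟨c, hc⟩ := hdvd
        rw [hc, Nat.cast_mul, CharP.cast_eq_zero R p, zero_mul, zero_mul]
      rw [Finset.sum_eq_single_of_mem 0 (Finset.mem_range.mpr hp.pos) h0]
      simp only [smul_eq_mul, Nat.choose_zero_right, Nat.choose_self, one_smul, tsub_zero,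
        Function.iterate_zero_apply, tsub_self]
      ring
end

section
/- Let K ⊆ L be a finite field extension. Then L is separable over K if and only if the module of Kähler differentials Ω_{L/K} is zero. -/
/-- A finite field extension `L/K` is separable iff the module of Kähler
differentials `Ω_{L/K}` vanishes. -/
theorem stmt8 {K L : Type*} [Field K] [Field L] [Algebra K L]
    [FiniteDimensional K L] :
    Algebra.IsSeparable K L ↔ Subsingleton (KaehlerDifferential K L) := by
  -- Replace `K` by its image `K₀` in `L`, which lives in the same universe as `L`.
  let K₀ : Subfield L := (algebraMap K L).fieldRange
  letI : Algebra K K₀ := ((algebraMap K L).rangeRestrictField).toAlgebra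
  haveI t1 : IsScalarTower K K₀ L := IsScalarTower.of_algebraMap_eq fun x ↦ rfl
  haveI f1 : Module.Finite (↥K₀) L := Module.Finite.of_restrictScalars_finite K K₀ L
  letI e : K ≃+* K₀ := RingEquiv.ofBijective ((algebraMap K L).rangeRestrictField)
    ⟨fun a b h => (algebraMap K L).injective congr(($h : L)),
      fun ⟨y, x, hx⟩ => ⟨x, Subtype.ext hx⟩⟩
  letI : Algebra K₀ K := e.symm.toRingHom.toAlgebra
  haveI t2 : IsScalarTower K₀ K L := IsScalarTower.of_algebraMap_eq fun x ↦ by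
    simp only [RingHom.algebraMap_toAlgebra, RingHom.comp_apply, RingEquiv.toRingHom_eq_coe,
      RingEquiv.coe_toRingHom]
    exact (congr((($(e.apply_symm_apply x) : K₀) : L))).symm
  have he : (algebraMap K₀ L).comp (e : K →+* K₀) =
      ((RingEquiv.refl L : L →+* L)).comp (algebraMap K L) := by
    ext x; rfl
  have he' : (algebraMap K L).comp (e.symm : K₀ →+* K) =
      ((RingEquiv.refl L : L →+* L)).comp (algebraMap K₀ L) := by
    ext x
    exact congrArg (fun y : K₀ => (y : L)) (e.apply_symm_apply x)
  have hsep : Algebra.IsSeparable K L ↔ Algebra.IsSeparable K₀ L := by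
    constructor
    · intro h; exact Algebra.IsSeparable.of_equiv_equiv e (RingEquiv.refl L) he
    · intro h; exact Algebra.IsSeparable.of_equiv_equiv e.symm (RingEquiv.refl L) he'
  have hΩ : Subsingleton (KaehlerDifferential K L) ↔
      Subsingleton (KaehlerDifferential K₀ L) := by
    constructor
    · intro h; exact (KaehlerDifferential.map_surjective K K₀ L).subsingleton
    · intro h; exact (KaehlerDifferential.map_surjective K₀ K L).subsingleton
  rw [hsep, hΩ, ← Algebra.formallyUnramified_iff]
  exact (Algebra.FormallyUnramified.iff_isSeparable K₀ L).symm
end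

section
/- Let K ⊆ L be a finite field extension in characteristic p > 0. If L/K is not separable, then the L-vector space of K-derivations Der_K(L) = Hom_L(Ω_{L/K}, L) is nonzero. -/
theorem stmt9aux {K L : Type u} [Field K] [Field L] [Algebra K L]
    [FiniteDimensional K L] (h : ¬ Algebra.IsSeparable K L) :
    ∃ D : Derivation K L L, D ≠ 0 := by
  by_contra hD
  push_neg at hD
  have h1 : Subsingleton (Derivation K L L) := ⟨fun a b => by rw [hD a, hD b]⟩
  have hsub : Subsingleton (Ω[L⁄K] →ₗ[L] L) :=
    (KaehlerDifferential.linearMapEquivDerivation K L).toEquiv.subsingleton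
  have h2 : Subsingleton (Ω[L⁄K]) := by
    by_contra hns
    rw [not_subsingleton_iff_nontrivial] at hns
    obtain ⟨x, hx⟩ := exists_ne (0 : Ω[L⁄K])
    exact hx ((Module.forall_dual_apply_eq_zero_iff L x).mp
      (fun f => by rw [Subsingleton.elim f 0]; rfl))
  have h3 : Algebra.FormallyUnramified K L := ⟨h2⟩
  exact h (Algebra.FormallyUnramified.isSeparable K L)

/-- If `L/K` is a finite inseparable field extension in characteristic `p > 0`, then
the space of `K`-derivations of `L` is nonzero. -/
theorem stmt9 {K L : Type*} [Field K] [Field L] [Algebra K L]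
    [FiniteDimensional K L] (p : ℕ) [Fact p.Prime] [CharP K p]
    (h : ¬ Algebra.IsSeparable K L) :
    ∃ D : Derivation K L L, D ≠ 0 := by
  set F := separableClosure K L
  have hF : ¬ Algebra.IsSeparable F L := fun hs => h (Algebra.IsSeparable.trans K F L)
  obtain ⟨D, hD⟩ := stmt9aux (K := F) hF
  refine ⟨D.restrictScalars K, fun h0 => hD ?_⟩
  ext x
  have := DFunLike.congr_fun h0 x
  simpa [Derivation.restrictScalars_apply] using this
end
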